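/- Characterization of the f-PS value (Theorem 2.1, PS part, due to Funaki–Koriyama): Suppose f ∈ F_+ satisfies: (1) Symmetry: f_i(v) = f_{π(i)}(πv) for every v ∈ V_+, every permutation π of N and every i ∈ N, where πv(πS) = v(S) for all S ⊆ N; (2) for every v ∈ V_+ there exists c ∈ ℝ such that for every x ∈ ℝ^N each of whose components x_i equals either c or f_i(v), there exists w ∈ V_+ with f(w) = x, and moreover if x_i = c for all i ∈ N then w can be chosen with all players pairwise symmetric in w; (3) for all v, w ∈ V_+, if v(S) = w(S) for every proper subset S ⊊ N, then f(v) = f(w). Then a solution φ on V_+ satisfies (E), (ETS), and (f-IER) if and only if φ_i(v) = (f_i(v)/Σ_{k∈N} f_k(v))·v(N) for every v ∈ V_+ and i ∈ N. -/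

import Mathlib

/-!
Theorem 2.1 (PS part, Funaki–Koriyama): characterization of the f-PS value.
-/

namespace Stmt14

/-- A TU-game on the player set `N`: a function on coalitions vanishing at `∅`. -/
abbrev Game (N : Type*) := {v : Finset N → ℝ // v ∅ = 0}

variable (N : Type*) [Fintype N] [DecidableEq N]

/-- `V₊`: TU-games whose sum of individual worths is strictly positive. -/
abbrev GamePos := {v : Game N // 0 < ∑ k, v.1 {k}}

/-- `F₊`: positive solutions, i.e. maps on `V₊` whose payoffs always have a
strictly positive sum. -/
abbrev SolPos := {f : GamePos N → N → ℝ // ∀ v, 0 < ∑ k, f v k}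

variable {N}

/-- The game `πv` defined by `πv(πS) = v(S)`, i.e. `πv(T) = v(π⁻¹ T)`. -/
def permGame (π : Equiv.Perm N) (v : Game N) : Game N :=
  ⟨fun S => v.1 (S.image π.symm), by
    show v.1 ((∅ : Finset N).image π.symm) = 0
    rw [Finset.image_empty]
    exact v.2⟩

/-- The game `πv` stays in `V₊`. -/
def permGamePos (π : Equiv.Perm N) (v : GamePos N) : GamePos N :=
  ⟨permGame π v.1, by
    have h : ∀ k : N, (permGame π v.1).1 {k} = v.1.1 {π.symm k} := by
      intro k
      show v.1.1 (({k} : Finset N).image π.symm) = _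
      rw [Finset.image_singleton]
    calc (0 : ℝ) < ∑ k, v.1.1 {k} := v.2
      _ = ∑ k, v.1.1 {π.symm k} := (Equiv.sum_comp π.symm fun k => v.1.1 {k}).symm
      _ = ∑ k, (permGame π v.1).1 {k} := by
          exact Finset.sum_congr rfl fun k _ => (h k).symm⟩

/-- Players `i` and `j` are symmetric in the game `v`. -/
def SymmetricIn (v : Game N) (i j : N) : Prop :=
  ∀ S : Finset N, i ∉ S → j ∉ S →
    v.1 (insert i S) - v.1 S = v.1 (insert j S) - v.1 S

/-- Efficiency (E) on `V₊`. -/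
def Efficient (φ : GamePos N → N → ℝ) : Prop :=
  ∀ v : GamePos N, ∑ i, φ v i = v.1.1 Finset.univ

/-- Equal treatment for a solution (ETS): symmetric players get equal payoffs. -/
def ETS (φ : GamePos N → N → ℝ) : Prop :=
  ∀ (v : GamePos N) (i j : N), SymmetricIn v.1 i j → φ v i = φ v j

/-- The `f`-individualistic property for equal ratio (`f`-IER). -/
def IER (f : SolPos N) (φ : GamePos N → N → ℝ) : Prop :=
  ∀ (v w : GamePos N) (i : N),
    v.1.1 Finset.univ / (∑ k, f.1 v k) = w.1.1 Finset.univ / (∑ k, f.1 w k) →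
    f.1 v i = f.1 w i → φ v i = φ w i


open Finset in
/-- Replace the worth of the grand coalition by `t`. -/
def setTop [Nonempty N] (v : Game N) (t : ℝ) : Game N :=
  ⟨fun S => if S = Finset.univ then t else v.1 S, by
    show (if (∅ : Finset N) = Finset.univ then t else v.1 ∅) = 0
    rw [if_neg (Ne.symm (Finset.univ_nonempty (α := N)).ne_empty)]
    exact v.2⟩

lemma setTop_ne [Nonempty N] (v : Game N) (t : ℝ) {S : Finset N}
    (h : S ≠ Finset.univ) : (setTop v t).1 S = v.1 S := if_neg h

lemma setTop_top [Nonempty N] (v : Game N) (t : ℝ) :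
    (setTop v t).1 Finset.univ = t := if_pos rfl

lemma singleton_ne_univ (hn2 : 2 ≤ Fintype.card N) (k : N) :
    ({k} : Finset N) ≠ Finset.univ := by
  intro h
  have h1 : ({k} : Finset N).card = Fintype.card N := by rw [h]; simp
  simp at h1; omega

/-- `setTop` lands in `V₊` when there are at least two players. -/
def setTopPos [Nonempty N] (hn2 : 2 ≤ Fintype.card N) (v : GamePos N) (t : ℝ) :
    GamePos N :=
  ⟨setTop v.1 t, by
    have h : ∀ k : N, (setTop v.1 t).1 {k} = v.1.1 {k} := fun k =>
      setTop_ne _ _ (singleton_ne_univ hn2 k)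
    rw [Finset.sum_congr rfl fun k _ => h k]; exact v.2⟩

lemma setTop_symm [Nonempty N] {v : Game N} {i j : N} (t : ℝ)
    (h : SymmetricIn v i j) : SymmetricIn (setTop v t) i j := by
  intro S hi hj
  by_cases hij : i = j
  · subst hij; rfl
  · have hS : S ≠ Finset.univ := fun h' => hi (h' ▸ Finset.mem_univ i)
    have hiS : insert i S ≠ Finset.univ := by
      intro h'
      have hm : j ∈ insert i S := h' ▸ Finset.mem_univ j
      rcases Finset.mem_insert.mp hm with h'' | h''
      · exact hij h''.symm
      · exact hj h''
    have hjS : insert j S ≠ Finset.univ := by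
      intro h'
      have hm : i ∈ insert j S := h' ▸ Finset.mem_univ i
      rcases Finset.mem_insert.mp hm with h'' | h''
      · exact hij h''
      · exact hi h''
    rw [setTop_ne _ _ hS, setTop_ne _ _ hiS, setTop_ne _ _ hjS]
    exact h S hi hj

lemma symm_swap_invariant {v : Game N} {i j : N} (h : SymmetricIn v i j)
    (S : Finset N) : v.1 (S.image (Equiv.swap i j)) = v.1 S := by
  have hins : ∀ S' : Finset N, i ∉ S' → j ∉ S' →
      v.1 (insert i S') = v.1 (insert j S') := by
    intro S' hi hj
    have := h S' hi hj
    linarith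
  have hmem : ∀ a, a ∈ S.image (Equiv.swap i j) ↔ Equiv.swap i j a ∈ S := by
    intro a
    simp only [Finset.mem_image]
    constructor
    · rintro ⟨b, hb, rfl⟩
      rwa [Equiv.swap_apply_self]
    · intro ha
      exact ⟨Equiv.swap i j a, ha, Equiv.swap_apply_self i j a⟩
  by_cases hi : i ∈ S <;> by_cases hj : j ∈ S
  · have himg : S.image (Equiv.swap i j) = S := by
      ext a; rw [hmem]
      by_cases hai : a = i
      · rw [hai, Equiv.swap_apply_left]; simp [hi, hj]
      by_cases haj : a = j
      · rw [haj, Equiv.swap_apply_right]; simp [hi, hj]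
      · rw [Equiv.swap_apply_of_ne_of_ne hai haj]
    rw [himg]
  · have hij : i ≠ j := fun h' => hj (h' ▸ hi)
    have himg : S.image (Equiv.swap i j) = insert j (S.erase i) := by
      ext a; rw [hmem, Finset.mem_insert, Finset.mem_erase]
      by_cases hai : a = i
      · rw [hai, Equiv.swap_apply_left]; simp [hi, hj, hij]
      by_cases haj : a = j
      · rw [haj, Equiv.swap_apply_right]; simp [hi, hj, hij]
      · rw [Equiv.swap_apply_of_ne_of_ne hai haj]; simp [hai, haj]
    rw [himg, ← hins (S.erase i) (Finset.notMem_erase i S)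
        (fun h' => hj (Finset.mem_of_mem_erase h')),
      Finset.insert_erase hi]
  · have hij : i ≠ j := fun h' => hi (h' ▸ hj)
    have himg : S.image (Equiv.swap i j) = insert i (S.erase j) := by
      ext a; rw [hmem, Finset.mem_insert, Finset.mem_erase]
      by_cases hai : a = i
      · rw [hai, Equiv.swap_apply_left]; simp [hi, hj, hij]
      by_cases haj : a = j
      · rw [haj, Equiv.swap_apply_right]; simp [hi, hj, hij, Ne.symm hij]
      · rw [Equiv.swap_apply_of_ne_of_ne hai haj]; simp [hai, haj]
    rw [himg, hins (S.erase j) (fun h' => hi (Finset.mem_of_mem_erase h'))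
        (Finset.notMem_erase j S), Finset.insert_erase hj]
  · have himg : S.image (Equiv.swap i j) = S := by
      ext a; rw [hmem]
      by_cases hai : a = i
      · rw [hai, Equiv.swap_apply_left]; simp [hi, hj]
      by_cases haj : a = j
      · rw [haj, Equiv.swap_apply_right]; simp [hi, hj]
      · rw [Equiv.swap_apply_of_ne_of_ne hai haj]
    rw [himg]

/-- Theorem 2.1 (PS part): if `f ∈ F₊` is symmetric, rich enough (assumption
(2)) and depends only on the proper coalitions (assumption (3)), then a
solution `φ` on `V₊` satisfies (E), (ETS) and (`f`-IER) iff `φ` is the `f`-PS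
value. -/
theorem fPS_characterization [Nonempty N]
    (f : SolPos N)
    (h1 : ∀ (v : GamePos N) (π : Equiv.Perm N) (i : N),
      f.1 v i = f.1 (permGamePos π v) (π i))
    (h2 : ∀ v : GamePos N, ∃ c : ℝ, ∀ x : N → ℝ,
      (∀ i, x i = c ∨ x i = f.1 v i) →
      ∃ w : GamePos N, (∀ i, f.1 w i = x i) ∧
        ((∀ i, x i = c) → ∀ i j, SymmetricIn w.1 i j))
    (h3 : ∀ v w : GamePos N,
      (∀ S : Finset N, S ≠ Finset.univ → v.1.1 S = w.1.1 S) → ∀ i, f.1 v i = f.1 w i)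
    (φ : GamePos N → N → ℝ) :
    (Efficient φ ∧ ETS φ ∧ IER f φ) ↔
      (∀ (v : GamePos N) (i : N),
        φ v i = (f.1 v i / ∑ k, f.1 v k) * v.1.1 Finset.univ) := by
  classical
  constructor
  · -- hard direction
    rintro ⟨hE, hT, hR⟩ v i
    by_cases hn1 : Fintype.card N = 1
    · have huniq : ∀ j : N, j = i := fun j =>
        Fintype.card_le_one_iff.mp (le_of_eq hn1) j i
      have huniv : (Finset.univ : Finset N) = {i} := by
        ext j; simp [huniq j]
      have hsum : ∀ g : N → ℝ, ∑ k, g k = g i := by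
        intro g; rw [huniv, Finset.sum_singleton]
      have hf : 0 < f.1 v i := by have := f.2 v; rwa [hsum] at this
      have hE' := hE v
      rw [hsum] at hE'
      rw [hE', hsum, div_self hf.ne', one_mul]
    · have hn2 : 2 ≤ Fintype.card N := by
        have := Fintype.card_pos (α := N); omega
      obtain ⟨c, hc⟩ := h2 v
      obtain ⟨u, hu, husym⟩ := hc (fun _ => c) (fun _ => Or.inl rfl)
      have husym := husym (fun _ => rfl)
      set x : N → ℝ := fun j => if j = i then f.1 v i else c with hxdef
      obtain ⟨w, hw, -⟩ := hc x (by
        intro j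
        by_cases h : j = i <;> simp [x, h])
      set Sv := ∑ k, f.1 v k with hSvdef
      have hSv : 0 < Sv := f.2 v
      set r := v.1.1 Finset.univ / Sv with hrdef
      set n : ℕ := Fintype.card N with hndef
      have hn0 : ((n : ℝ)) ≠ 0 := by
        have : 0 < n := by omega
        positivity
      have hSu : ∑ k, f.1 u k = (n : ℝ) * c := by
        rw [Finset.sum_congr rfl fun k _ => hu k, Finset.sum_const,
          Finset.card_univ, nsmul_eq_mul]
      have hcpos : 0 < c := by
        have h := f.2 u
        rw [hSu] at h
        by_contra hcn
        push_neg at hcn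
        nlinarith [show (0:ℝ) < (n:ℝ) by positivity]
      have hSw : ∑ k, f.1 w k = f.1 v i + ((n : ℝ) - 1) * c := by
        rw [Finset.sum_congr rfl fun k _ => hw k,
          ← Finset.add_sum_erase _ x (Finset.mem_univ i)]
        have hxi : x i = f.1 v i := by simp [x]
        have hrest : ∑ j ∈ Finset.univ.erase i, x j = ((n : ℝ) - 1) * c := by
          have hxc : ∀ j ∈ Finset.univ.erase i, x j = c := by
            intro j hj
            simp [x, Finset.ne_of_mem_erase hj]
          rw [Finset.sum_congr rfl hxc, Finset.sum_const,
            Finset.card_erase_of_mem (Finset.mem_univ i), Finset.card_univ,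
            nsmul_eq_mul, Nat.cast_sub (by omega : 1 ≤ Fintype.card N)]
          norm_num
          exact Or.inl rfl
        rw [hxi, hrest]
      have hSwpos : 0 < f.1 v i + ((n : ℝ) - 1) * c := hSw ▸ f.2 w
      set u' := setTopPos hn2 u (r * ((n : ℝ) * c)) with hu'def
      set w' := setTopPos hn2 w (r * (f.1 v i + ((n : ℝ) - 1) * c)) with hw'def
      have hfu' : ∀ k, f.1 u' k = f.1 u k :=
        h3 u' u (fun S hS => setTop_ne _ _ hS)
      have hfw' : ∀ k, f.1 w' k = f.1 w k :=
        h3 w' w (fun S hS => setTop_ne _ _ hS)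
      have hSu' : ∑ k, f.1 u' k = (n : ℝ) * c := by
        rw [Finset.sum_congr rfl fun k _ => hfu' k]; exact hSu
      have hSw' : ∑ k, f.1 w' k = f.1 v i + ((n : ℝ) - 1) * c := by
        rw [Finset.sum_congr rfl fun k _ => hfw' k]; exact hSw
      have hu'top : u'.1.1 Finset.univ = r * ((n : ℝ) * c) := setTop_top _ _
      have hw'top : w'.1.1 Finset.univ = r * (f.1 v i + ((n : ℝ) - 1) * c) :=
        setTop_top _ _
      have hratu' : u'.1.1 Finset.univ / (∑ k, f.1 u' k) = r := by
        rw [hu'top, hSu']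
        field_simp
      have hratw' : w'.1.1 Finset.univ / (∑ k, f.1 w' k) = r := by
        rw [hw'top, hSw']
        field_simp
      -- all players get r*c in u'
      have hφu' : ∀ j, φ u' j = r * c := by
        have hall : ∀ j, φ u' j = φ u' i := fun j =>
          hT u' j i (setTop_symm _ (husym j i))
        have hsum := hE u'
        rw [Finset.sum_congr rfl (fun j _ => hall j), Finset.sum_const,
          Finset.card_univ, nsmul_eq_mul, hu'top] at hsum
        have : φ u' i = r * c := by
          have h' : (n : ℝ) * φ u' i = (n : ℝ) * (r * c) := by
            rw [hsum]; ring
          exact mul_left_cancel₀ hn0 h'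
        intro j; rw [hall j, this]
      -- players other than i in w'
      have hφw' : ∀ j, j ≠ i → φ w' j = r * c := by
        intro j hj
        rw [← hφu' j]
        refine hR w' u' j (by rw [hratu', hratw']) ?_
        rw [hfw' j, hfu' j, hw j, hu j]
        simp [x, hj]
      have hvw' : φ v i = φ w' i := by
        refine hR v w' i (by rw [hratw']) ?_
        rw [hfw' i, hw i]
        simp [x]
      -- efficiency on w'
      have hEw' := hE w'
      rw [← Finset.add_sum_erase _ (φ w') (Finset.mem_univ i), hw'top] at hEw'
      have hrest : ∑ j ∈ Finset.univ.erase i, φ w' j = ((n : ℝ) - 1) * (r * c) := by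
        have hval : ∀ j ∈ Finset.univ.erase i, φ w' j = r * c := fun j hj =>
          hφw' j (Finset.ne_of_mem_erase hj)
        rw [Finset.sum_congr rfl hval, Finset.sum_const, Finset.card_erase_of_mem (Finset.mem_univ i),
          Finset.card_univ, nsmul_eq_mul,
          Nat.cast_sub (by omega : 1 ≤ Fintype.card N)]
        norm_num
        exact Or.inl rfl
      rw [hrest] at hEw'
      have hfin : φ w' i = r * f.1 v i := by linarith [hEw']
      rw [hvw', hfin, hrdef]
      ring
  · -- easy direction
    intro h
    refine ⟨?_, ?_, ?_⟩
    · intro v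
      calc ∑ i, φ v i = ∑ i, (f.1 v i / ∑ k, f.1 v k) * v.1.1 Finset.univ :=
            Finset.sum_congr rfl fun i _ => h v i
        _ = ((∑ i, f.1 v i) / ∑ k, f.1 v k) * v.1.1 Finset.univ := by
            rw [← Finset.sum_mul, ← Finset.sum_div]
        _ = v.1.1 Finset.univ := by
            rw [div_self (f.2 v).ne', one_mul]
    · intro v i j hsym
      have hperm : permGamePos (Equiv.swap i j) v = v := by
        apply Subtype.ext
        apply Subtype.ext
        funext S
        show v.1.1 (S.image (Equiv.swap i j).symm) = v.1.1 S
        rw [Equiv.symm_swap]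
        exact symm_swap_invariant hsym S
      have hf : f.1 v i = f.1 v j := by
        have := h1 v (Equiv.swap i j) i
        rwa [hperm, Equiv.swap_apply_left] at this
      rw [h v i, h v j, hf]
    · intro v w i hrat hfi
      rw [h v i, h w i, div_mul_eq_mul_div, mul_div_assoc, hrat, hfi,
        ← mul_div_assoc, ← div_mul_eq_mul_div]


end Stmt14
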